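/- arXiv:2108.13135 — 2 statements merged into one kernel-verified Lean document; each statement's English description precedes it below -/
import Mathlib

section
/- Every simplicial group is a fibrant simplicial set (Kan complex), and every morphism of simplicial groups f: G → H which is surjective in each simplicial degree n ≥ 1 is a Kan fibration of underlying simplicial sets. -/
open CategoryTheory Simplicial SSet

/-- A morphism of simplicial sets is a Kan fibration if it has the right lifting
property with respect to all horn inclusions `Λ[n, i] → Δ[n]`. -/
def IsKanFibration {X Y : SSet} (p : X ⟶ Y) : Prop :=
  ∀ (n : ℕ) (i : Fin (n + 1)), HasLiftingProperty (Λ[n, i].ι) p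

/-- The Kan complex condition as defined in the older Mathlib (`SSet.KanComplex`):
every horn `Λ[n, i] ⟶ S` (for every `n : ℕ`) extends to `Δ[n] ⟶ S`. -/
class OldKanComplex (S : SSet) : Prop where
  hornFilling : ∀ ⦃n : ℕ⦄ ⦃i : Fin (n + 1)⦄ (σ₀ : (Λ[n, i] : SSet) ⟶ S),
    ∃ σ : Δ[n] ⟶ S, σ₀ = Λ[n, i].ι ≫ σ

section MoorePrep
open SimplexCategory Opposite

namespace Moore

universe u


lemma elem {A B : GrpCat} {u v : A ⟶ B} (h : u = v) (z : A) : u z = v z := by rw [h]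

/-- The generic `m`-simplex of `Δ[m]`. -/
def gen (m : ℕ) : Δ[m].obj (op ⦋m⦌) :=
  (stdSimplex.objEquiv).symm (𝟙 (SimplexCategory.mk m))

/-- The map `Δ[m] ⟶ X` corresponding to an `m`-simplex `y`. -/
def simplexHom {X : SSet.{u}} {m : ℕ} (y : X.obj (op ⦋m⦌)) : Δ[m] ⟶ X where
  app k := TypeCat.ofHom (fun α => X.map (stdSimplex.objEquiv α).op y)
  naturality k k' φ := by
    refine ConcreteCategory.hom_ext _ _ fun α => ?_
    dsimp only [types_comp_apply, TypeCat.ofHom_apply]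
    rw [← FunctorToTypes.map_comp_apply]
    congr 1

lemma simplexHom_app {X : SSet.{u}} {m : ℕ} (y : X.obj (op ⦋m⦌)) (k : SimplexCategoryᵒᵖ)
    (α : Δ[m].obj k) :
    (simplexHom y).app k α = X.map (stdSimplex.objEquiv α).op y := rfl

lemma simplexHom_comp {X Y : SSet.{u}} {m : ℕ} (y : X.obj (op ⦋m⦌)) (p : X ⟶ Y) :
    simplexHom y ≫ p = simplexHom (p.app _ y) := by
  apply NatTrans.ext; funext k; refine ConcreteCategory.hom_ext _ _ fun α => ?_
  simp only [NatTrans.comp_app, types_comp_apply, simplexHom_app]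
  exact (NatTrans.naturality_apply p _ _)

lemma eq_simplexHom {X : SSet.{u}} {m : ℕ} (v : Δ[m] ⟶ X) :
    v = simplexHom (v.app _ (gen m)) := by
  apply NatTrans.ext; funext k; refine ConcreteCategory.hom_ext _ _ fun α => ?_
  have : α = Δ[m].map (stdSimplex.objEquiv α).op (gen m) := by
    rw [stdSimplex.map_apply, gen]
    simp
  conv_lhs => rw [this]
  exact NatTrans.naturality_apply v _ _

lemma hornInclusion_simplexHom_face {n : ℕ} {i : Fin (n + 2)} {X : SSet.{u}}
    (y : X.obj (op ⦋n + 1⦌)) (j : Fin (n + 2)) (h : j ≠ i) :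
    (Λ[n+1, i].ι ≫ simplexHom y).app _ (horn.face i j h) =
      X.map (SimplexCategory.δ j).op y := by
  show X.map (stdSimplex.objEquiv.{u}
      ((Λ[n+1, i].ι).app _ (horn.face i j h))).op y = _
  congr 2



variable (G : SimplicialObject GrpCat)

lemma dss {n : ℕ} (i : Fin (n+1)) (z : G.obj (op ⦋n⦌)) :
    G.δ i.castSucc (G.σ i z) = z := by
  simpa using elem (SimplicialObject.δ_comp_σ_self (X := G) (i := i)) z

lemma dss' {n : ℕ} (i : Fin (n+1)) (z : G.obj (op ⦋n⦌)) :
    G.δ i.succ (G.σ i z) = z := by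
  simpa using elem (SimplicialObject.δ_comp_σ_succ (X := G) (i := i)) z

lemma dsle {n : ℕ} (i : Fin (n+2)) (j : Fin (n+1)) (H : i ≤ j.castSucc)
    (z : G.obj (op ⦋n+1⦌)) :
    G.δ i.castSucc (G.σ j.succ z) = G.σ j (G.δ i z) := by
  simpa using elem (SimplicialObject.δ_comp_σ_of_le (X := G) H) z

lemma dsgt {n : ℕ} (i : Fin (n+2)) (j : Fin (n+1)) (H : j.castSucc < i)
    (z : G.obj (op ⦋n+1⦌)) :
    G.δ i.succ (G.σ j.castSucc z) = G.σ j (G.δ i z) := by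
  simpa using elem (SimplicialObject.δ_comp_σ_of_gt (X := G) H) z

lemma dd {n : ℕ} (i j : Fin (n+2)) (H : i ≤ j) (z : G.obj (op ⦋n+2⦌)) :
    G.δ i (G.δ j.succ z) = G.δ j (G.δ i.castSucc z) := by
  simpa using elem (SimplicialObject.δ_comp_δ (X := G) H) z

variable (P : ∀ m : SimplexCategoryᵒᵖ, Subgroup (G.obj m))

lemma step
    (hP : ∀ {m m' : SimplexCategoryᵒᵖ} (φ : m ⟶ m') (g : G.obj m), g ∈ P m → G.map φ g ∈ P m')
    {n : ℕ} {i₀ : Fin (n+3)}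
    (x : ∀ j : Fin (n+3), j ≠ i₀ → G.obj (op ⦋n+1⦌))
    (hmem : ∀ j h, x j h ∈ P (op ⦋n+1⦌))
    (hx : ∀ (a b : Fin (n+2)), a ≤ b → ∀ (ha : a.castSucc ≠ i₀) (hb : b.succ ≠ i₀),
      G.δ a (x b.succ hb) = G.δ b (x a.castSucc ha))
    (t : Fin (n+2)) (k : Fin (n+3)) (hk : (k:ℕ) = t ∨ (k:ℕ) = (t:ℕ)+1) (hki : k ≠ i₀)
    (y : G.obj (op ⦋n+2⦌)) (hyP : y ∈ P (op ⦋n+2⦌)) :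
    ∃ y' ∈ P (op ⦋n+2⦌), G.δ k y' = x k hki ∧
      ∀ (j : Fin (n+3)) (hj : j ≠ i₀), ((j:ℕ) < t ∨ (t:ℕ)+1 < j) →
        G.δ j y = x j hj → G.δ j y' = x j hj := by
  refine ⟨y * (G.σ t (G.δ k y))⁻¹ * G.σ t (x k hki), ?_, ?_, ?_⟩
  · exact mul_mem (mul_mem hyP (inv_mem (hP _ _ (hP _ _ hyP)))) (hP _ _ (hmem _ _))
  · -- the new face k
    rcases hk with hk | hk
    · have hkc : k = t.castSucc := by
        apply Fin.ext; simpa using hk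
      subst hkc
      simp [map_mul, map_inv, dss]
    · have hkc : k = t.succ := by
        apply Fin.ext; simpa using hk
      subst hkc
      simp [map_mul, map_inv, dss']
  · -- old faces are preserved
    have xcongr : ∀ (k₁ k₂ : Fin (n+3)) (e : k₁ = k₂) (h : k₁ ≠ i₀),
        x k₁ h = x k₂ (e ▸ h) := by rintro k₁ _ rfl h; rfl
    intro j hj hjt hjy
    rcases hjt with hjt | hjt
    · -- j < t
      have hj1 : (j:ℕ) < n + 2 := by omega
      set a : Fin (n+2) := ⟨j, hj1⟩ with ha
      have hja : j = a.castSucc := by apply Fin.ext; simp [ha]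
      set u : Fin (n+1) := ⟨(t:ℕ)-1, by omega⟩ with hu
      have htu : t = u.succ := by apply Fin.ext; simp [hu]; omega
      set b : Fin (n+2) := ⟨(k:ℕ)-1, by omega⟩ with hb
      have hkb : k = b.succ := by apply Fin.ext; simp [hb]; omega
      have hab : a ≤ b := by simp [ha, hb, Fin.le_def]; omega
      have hau : a ≤ u.castSucc := by simp [ha, hu, Fin.le_def]; omega
      have dj : ∀ z, G.δ j (G.σ t z) = G.σ u (G.δ a z) := by
        intro z; rw [hja, htu]; exact dsle G a u hau z
      have e1 : G.δ a (G.δ k y) = G.δ b (x j hj) := by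
        rw [hkb, dd G a b hab, ← hja, hjy]
      have e2 : G.δ a (x k hki) = G.δ b (x j hj) := by
        have h1 := hx a b hab (hja ▸ hj) (hkb ▸ hki)
        rw [xcongr _ _ hkb hki, xcongr _ _ hja hj]
        exact h1
      calc G.δ j (y * (G.σ t (G.δ k y))⁻¹ * G.σ t (x k hki))
          = G.δ j y * (G.δ j (G.σ t (G.δ k y)))⁻¹ * G.δ j (G.σ t (x k hki)) := by
            rw [map_mul, map_mul, map_inv]
        _ = x j hj * (G.σ u (G.δ a (G.δ k y)))⁻¹ * G.σ u (G.δ a (x k hki)) := by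
            rw [dj, dj, hjy]
        _ = x j hj := by rw [e1, e2]; simp
    · -- j > t + 1
      have hj2 : (j:ℕ) ≤ n + 2 := by omega
      have hk2 : (k:ℕ) < n + 2 := by omega
      set c : Fin (n+2) := ⟨(j:ℕ)-1, by omega⟩ with hc
      have hjc : j = c.succ := by apply Fin.ext; simp [hc]; omega
      set tt : Fin (n+1) := ⟨t, by omega⟩ with htt0
      have htt : t = tt.castSucc := by apply Fin.ext; simp [htt0]
      set a : Fin (n+2) := ⟨k, hk2⟩ with ha
      have hka : k = a.castSucc := by apply Fin.ext; simp [ha]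
      have hac : a ≤ c := by simp [ha, hc, Fin.le_def]; omega
      have dj : ∀ z, G.δ j (G.σ t z) = G.σ tt (G.δ c z) := by
        intro z; rw [hjc, htt]
        exact dsgt G c tt (by simp [hc, htt0, Fin.lt_def]; omega) z
      have e1 : G.δ c (G.δ k y) = G.δ a (x j hj) := by
        rw [hka, ← dd G a c hac, ← hjc, hjy]
      have e2 : G.δ c (x k hki) = G.δ a (x j hj) := by
        have h1 := hx a c hac (hka ▸ hki) (hjc ▸ hj)
        rw [xcongr _ _ hka hki, xcongr _ _ hjc hj]
        exact h1.symm
      calc G.δ j (y * (G.σ t (G.δ k y))⁻¹ * G.σ t (x k hki))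
          = G.δ j y * (G.δ j (G.σ t (G.δ k y)))⁻¹ * G.δ j (G.σ t (x k hki)) := by
            rw [map_mul, map_mul, map_inv]
        _ = x j hj * (G.σ tt (G.δ c (G.δ k y)))⁻¹ * G.σ tt (G.δ c (x k hki)) := by
            rw [dj, dj, hjy]
        _ = x j hj := by rw [e1, e2]; simp

lemma fill_core
    (hP : ∀ {m m' : SimplexCategoryᵒᵖ} (φ : m ⟶ m') (g : G.obj m), g ∈ P m → G.map φ g ∈ P m')
    {n : ℕ} {i₀ : Fin (n+3)}
    (x : ∀ j : Fin (n+3), j ≠ i₀ → G.obj (op ⦋n+1⦌))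
    (hmem : ∀ j h, x j h ∈ P (op ⦋n+1⦌))
    (hx : ∀ (a b : Fin (n+2)), a ≤ b → ∀ (ha : a.castSucc ≠ i₀) (hb : b.succ ≠ i₀),
      G.δ a (x b.succ hb) = G.δ b (x a.castSucc ha)) :
    ∃ y ∈ P (op ⦋n+2⦌), ∀ (j : Fin (n+3)) (h : j ≠ i₀), G.δ j y = x j h := by
  have phase1 : ∀ p : ℕ, p ≤ (i₀:ℕ) → ∃ y ∈ P (op ⦋n+2⦌),
      ∀ (j : Fin (n+3)) (hj : j ≠ i₀), (j:ℕ) < p → G.δ j y = x j hj := by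
    intro p
    induction p with
    | zero => exact fun _ => ⟨1, one_mem _, fun j hj h => by omega⟩
    | succ p ih =>
      intro hp
      obtain ⟨y, hyP, hy⟩ := ih (by omega)
      have hpn : p < n + 2 := by omega
      set t : Fin (n+2) := ⟨p, hpn⟩ with htdef
      have hki : t.castSucc ≠ i₀ := by
        intro e; rw [Fin.ext_iff] at e; simp [htdef] at e; omega
      obtain ⟨y', hy'P, hk, hpres⟩ :=
        step G P hP x hmem hx t t.castSucc (Or.inl (by simp)) hki y hyP
      refine ⟨y', hy'P, fun j hj hjp => ?_⟩
      rcases Nat.lt_or_ge (j:ℕ) p with h | h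
      · exact hpres j hj (Or.inl (by simp [htdef]; omega)) (hy j hj h)
      · have e : j = t.castSucc := by apply Fin.ext; simp [htdef]; omega
        subst e
        exact hk
  have phase2 : ∀ q : ℕ, q + (i₀:ℕ) ≤ n + 2 → ∃ y ∈ P (op ⦋n+2⦌),
      (∀ (j : Fin (n+3)) (hj : j ≠ i₀), (j:ℕ) < (i₀:ℕ) → G.δ j y = x j hj) ∧
      (∀ (j : Fin (n+3)) (hj : j ≠ i₀), n + 2 - q < (j:ℕ) → G.δ j y = x j hj) := by
    intro q
    induction q with
    | zero =>
      intro _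
      obtain ⟨y, hyP, hy⟩ := phase1 i₀ le_rfl
      refine ⟨y, hyP, fun j hj h => hy j hj h, fun j hj h => ?_⟩
      exact absurd (j.isLt) (by omega)
    | succ q ih =>
      intro hq
      obtain ⟨y, hyP, h1, h2⟩ := ih (by omega)
      have hqn : n + 1 - q < n + 2 := by omega
      set t : Fin (n+2) := ⟨n + 1 - q, hqn⟩ with htdef
      have hki : t.succ ≠ i₀ := by
        intro e; rw [Fin.ext_iff] at e; simp [htdef] at e; omega
      obtain ⟨y', hy'P, hk, hpres⟩ :=
        step G P hP x hmem hx t t.succ (Or.inr (by simp)) hki y hyP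
      refine ⟨y', hy'P, fun j hj hji => ?_, fun j hj hjq => ?_⟩
      · refine hpres j hj (Or.inl (by simp [htdef]; omega)) (h1 j hj hji)
      · rcases Nat.lt_or_ge (n + 2 - q) (j:ℕ) with h | h
        · exact hpres j hj (Or.inr (by simp [htdef]; omega)) (h2 j hj h)
        · have e : j = t.succ := by apply Fin.ext; simp [htdef]; omega
          subst e
          exact hk
  obtain ⟨y, hyP, h1, h2⟩ := phase2 (n + 2 - (i₀:ℕ)) (by omega)
  refine ⟨y, hyP, fun j hj => ?_⟩
  have hne : (j:ℕ) ≠ (i₀:ℕ) := fun e => hj (Fin.ext e)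
  rcases Nat.lt_or_ge (j:ℕ) (i₀:ℕ) with h | h
  · exact h1 j hj h
  · exact h2 j hj (by omega)

lemma fill_one
    (hP : ∀ {m m' : SimplexCategoryᵒᵖ} (φ : m ⟶ m') (g : G.obj m), g ∈ P m → G.map φ g ∈ P m')
    (i₀ : Fin 2) (x : ∀ j : Fin 2, j ≠ i₀ → G.obj (op ⦋0⦌))
    (hmem : ∀ j h, x j h ∈ P (op ⦋0⦌)) :
    ∃ y ∈ P (op ⦋1⦌), ∀ (j : Fin 2) (h : j ≠ i₀), G.δ j y = x j h := by
  by_cases h0 : i₀ = 0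
  · subst h0
    have h1 : (1 : Fin 2) ≠ 0 := by decide
    refine ⟨G.σ 0 (x 1 h1), hP _ _ (hmem _ _), fun j hj => ?_⟩
    have e : j = 1 := by
      apply Fin.ext
      have := Fin.val_ne_of_ne hj
      omega
    subst e
    exact dss' G 0 _
  · have h0' : i₀ = 1 := by
      apply Fin.ext
      have := Fin.val_ne_of_ne h0
      omega
    subst h0'
    have h1 : (0 : Fin 2) ≠ 1 := by decide
    refine ⟨G.σ 0 (x 0 h1), hP _ _ (hmem _ _), fun j hj => ?_⟩
    have e : j = 0 := by
      apply Fin.ext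
      have := Fin.val_ne_of_ne hj
      omega
    subst e
    exact dss G 0 _

lemma horn_compat {n : ℕ} {i₀ : Fin (n+3)} (σ : (Λ[n+2, i₀] : SSet) ⟶ (G ⋙ forget GrpCat))
    (a b : Fin (n+2)) (hab : a ≤ b) (ha : a.castSucc ≠ i₀) (hb : b.succ ≠ i₀) :
    G.δ a (σ.app _ (horn.face i₀ b.succ hb)) = G.δ b (σ.app _ (horn.face i₀ a.castSucc ha)) := by
  have key : (Λ[n+2, i₀] : SSet).map (SimplexCategory.δ a).op (horn.face i₀ b.succ hb) =
      (Λ[n+2, i₀] : SSet).map (SimplexCategory.δ b).op (horn.face i₀ a.castSucc ha) := by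
    apply Subtype.ext
    apply (stdSimplex.objEquiv).injective
    show (stdSimplex.objEquiv) (Δ[n+2].map _ _) =
      (stdSimplex.objEquiv) (Δ[n+2].map _ _)
    rw [stdSimplex.map_apply, stdSimplex.map_apply]
    simp [SimplexCategory.δ_comp_δ hab]
    exact SimplexCategory.δ_comp_δ hab
  have n1 := NatTrans.naturality_apply σ (SimplexCategory.δ a).op (horn.face i₀ b.succ hb)
  have n2 := NatTrans.naturality_apply σ (SimplexCategory.δ b).op (horn.face i₀ a.castSucc ha)
  show ((G ⋙ forget GrpCat).map (SimplexCategory.δ a).op) (σ.app _ _) =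
    ((G ⋙ forget GrpCat).map (SimplexCategory.δ b).op) (σ.app _ _)
  rw [← n1, ← n2, key]


lemma natapp {G H : SimplicialObject GrpCat} (f : G ⟶ H) {m m' : SimplexCategoryᵒᵖ}
    (φ : m ⟶ m') (z : G.obj m) :
    f.app m' (G.map φ z) = H.map φ (f.app m z) := by
  have h := elem (f.naturality φ) z
  simp only [CategoryTheory.comp_apply] at h
  exact h

lemma horn_zero_empty {i : Fin 1} {k : SimplexCategoryᵒᵖ} (α : Λ[0, i].obj k) : False := by
  apply α.2
  apply Set.eq_univ_of_forall
  intro x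
  refine Or.inr ?_
  have hx : x = i := by rw [Fin.eq_zero x, Fin.eq_zero i]
  simp [hx]

end Moore

end MoorePrep

open Moore SimplexCategory Opposite in
/-- Every simplicial group is a fibrant simplicial set (a Kan
complex), and every morphism of simplicial groups `f : G → H` which is surjective in
each simplicial degree `n ≥ 1` is a Kan fibration of underlying simplicial sets. -/
theorem stmt7 :
    (∀ G : SimplicialObject GrpCat, OldKanComplex (G ⋙ forget GrpCat)) ∧
    (∀ (G H : SimplicialObject GrpCat) (f : G ⟶ H),
      (∀ n : ℕ, 1 ≤ n →
        Function.Surjective (f.app (Opposite.op (SimplexCategory.mk n)))) →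
      IsKanFibration (X := G ⋙ forget GrpCat) (Y := H ⋙ forget GrpCat)
        (CategoryTheory.Functor.whiskerRight f (forget GrpCat))) := by
  constructor
  · intro G
    constructor
    intro n i σ₀
    match n, i, σ₀ with
    | 0, i, σ₀ =>
      refine ⟨simplexHom (1 : G.obj (op ⦋0⦌)), ?_⟩
      apply NatTrans.ext; funext k; refine ConcreteCategory.hom_ext _ _ fun α => ?_
      exact (horn_zero_empty α).elim
    | 0+1, i, σ₀ =>
      have key : ∃ y : G.obj (op ⦋0+1⦌), ∀ (j : Fin (0+2)) (h : j ≠ i),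
          G.δ j y = σ₀.app _ (horn.face i j h) := by
        obtain ⟨y, -, hy⟩ := fill_one G (fun _ => ⊤) (fun _ _ _ => trivial) i
          (fun j h => σ₀.app _ (horn.face i j h)) (fun _ _ => trivial)
        exact ⟨y, hy⟩
      obtain ⟨y, hy⟩ := key
      refine ⟨simplexHom y, ?_⟩
      apply horn.hom_ext
      intro j h
      rw [hornInclusion_simplexHom_face]
      exact (hy j h).symm
    | (k+1)+1, i, σ₀ =>
      have key : ∃ y : G.obj (op ⦋(k+1)+1⦌), ∀ (j : Fin ((k+1)+2)) (h : j ≠ i),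
          G.δ j y = σ₀.app _ (horn.face i j h) := by
        obtain ⟨y, -, hy⟩ := fill_core G (fun _ => ⊤) (fun _ _ _ => trivial)
          (fun j h => σ₀.app _ (horn.face i j h)) (fun _ _ => trivial)
          (fun a b hab ha hb => horn_compat G σ₀ a b hab ha hb)
        exact ⟨y, hy⟩
      obtain ⟨y, hy⟩ := key
      refine ⟨simplexHom y, ?_⟩
      apply horn.hom_ext
      intro j h
      rw [hornInclusion_simplexHom_face]
      exact (hy j h).symm
  · intro G H f hf n i
    constructor
    intro u v sq
    match n, i, u, v, sq with
    | 0, i, u, v, sq =>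
      set yH := v.app _ (gen 0) with hyH
      obtain ⟨g1, hg1⟩ := hf 1 le_rfl (H.σ 0 yH)
      refine CommSq.HasLift.mk' ⟨simplexHom (G.δ (Fin.castSucc 0) g1), ?_, ?_⟩
      · apply NatTrans.ext; funext k; refine ConcreteCategory.hom_ext _ _ fun α => ?_
        exact (horn_zero_empty α).elim
      · rw [simplexHom_comp]
        have he : (Functor.whiskerRight f (forget GrpCat)).app (op ⦋0⦌) (G.δ (Fin.castSucc 0) g1) = yH := by
          show f.app _ (G.δ (Fin.castSucc 0) g1) = yH
          rw [show f.app _ (G.δ (Fin.castSucc 0) g1) = H.δ (Fin.castSucc 0) (f.app _ g1) from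
            natapp f _ _, hg1]
          exact dss H 0 yH
        rw [he]
        exact (eq_simplexHom v).symm
    | 0+1, i, u, v, sq =>
      set yH := v.app _ (gen (0+1)) with hyH
      have hv : v = simplexHom yH := eq_simplexHom v
      set xg : ∀ (j : Fin (0+2)), j ≠ i → ↥(G.obj (op ⦋0⦌)) :=
        (fun j h => u.app _ (horn.face i j h)) with hxg
      have hcomm : ∀ (j : Fin (0+2)) (h : j ≠ i),
          f.app _ (xg j h) = H.δ j yH := by
        intro j h
        have hw := sq.w
        rw [hv] at hw
        have h2 := types_congr_hom (congrArg (fun (w : (Λ[0+1, i] : SSet) ⟶ H ⋙ forget GrpCat) =>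
          w.app (op ⦋0⦌)) hw) (horn.face i j h)
        dsimp only at h2
        rw [hornInclusion_simplexHom_face] at h2
        exact h2
      obtain ⟨g, hg⟩ := hf (0+1) (by omega) yH
      have hker : ∀ {mm mm' : SimplexCategoryᵒᵖ} (φ : mm ⟶ mm') (z : G.obj mm),
          z ∈ (f.app mm).hom.ker → G.map φ z ∈ (f.app mm').hom.ker := by
        intro mm mm' φ z hz
        rw [MonoidHom.mem_ker] at hz ⊢
        rw [natapp f φ z, hz, map_one]
      have hmem : ∀ (j : Fin (0+2)) (h : j ≠ i),
          xg j h * (G.δ j g)⁻¹ ∈ (f.app (op ⦋0⦌)).hom.ker := by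
        intro j h
        rw [MonoidHom.mem_ker, map_mul, map_inv]
        rw [show f.app _ (G.δ j g) = H.δ j (f.app _ g) from natapp f _ _, hg]
        rw [hcomm j h]
        simp
      have key : ∃ y' ∈ (f.app (op ⦋0+1⦌)).hom.ker, ∀ (j : Fin (0+2)) (h : j ≠ i),
          G.δ j y' = xg j h * (G.δ j g)⁻¹ := by
        exact fill_one G (fun mm => (f.app mm).hom.ker) hker i _ hmem
      obtain ⟨y', hy'ker, hy'⟩ := key
      refine CommSq.HasLift.mk' ⟨simplexHom (y' * g), ?_, ?_⟩
      · apply horn.hom_ext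
        intro j h
        rw [hornInclusion_simplexHom_face]
        show G.δ j (y' * g) = xg j h
        rw [map_mul, hy' j h]
        simp
      · rw [simplexHom_comp]
        have he : (Functor.whiskerRight f (forget GrpCat)).app (op ⦋0+1⦌) (y' * g) = yH := by
          show f.app _ (y' * g) = yH
          rw [map_mul, MonoidHom.mem_ker.mp hy'ker, one_mul, hg]
        rw [he]
        exact hv.symm
    | (k+1)+1, i, u, v, sq =>
      set yH := v.app _ (gen ((k+1)+1)) with hyH
      have hv : v = simplexHom yH := eq_simplexHom v
      set xg : ∀ (j : Fin ((k+1)+2)), j ≠ i → ↥(G.obj (op ⦋(k+1)⦌)) :=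
        (fun j h => u.app _ (horn.face i j h)) with hxg
      have hcomm : ∀ (j : Fin ((k+1)+2)) (h : j ≠ i),
          f.app _ (xg j h) = H.δ j yH := by
        intro j h
        have hw := sq.w
        rw [hv] at hw
        have h2 := types_congr_hom (congrArg (fun (w : (Λ[(k+1)+1, i] : SSet) ⟶ H ⋙ forget GrpCat) =>
          w.app (op ⦋(k+1)⦌)) hw) (horn.face i j h)
        dsimp only at h2
        rw [hornInclusion_simplexHom_face] at h2
        exact h2
      obtain ⟨g, hg⟩ := hf ((k+1)+1) (by omega) yH
      have hker : ∀ {mm mm' : SimplexCategoryᵒᵖ} (φ : mm ⟶ mm') (z : G.obj mm),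
          z ∈ (f.app mm).hom.ker → G.map φ z ∈ (f.app mm').hom.ker := by
        intro mm mm' φ z hz
        rw [MonoidHom.mem_ker] at hz ⊢
        rw [natapp f φ z, hz, map_one]
      have hmem : ∀ (j : Fin ((k+1)+2)) (h : j ≠ i),
          xg j h * (G.δ j g)⁻¹ ∈ (f.app (op ⦋(k+1)⦌)).hom.ker := by
        intro j h
        rw [MonoidHom.mem_ker, map_mul, map_inv]
        rw [show f.app _ (G.δ j g) = H.δ j (f.app _ g) from natapp f _ _, hg]
        rw [hcomm j h]
        simp
      have key : ∃ y' ∈ (f.app (op ⦋(k+1)+1⦌)).hom.ker, ∀ (j : Fin ((k+1)+2)) (h : j ≠ i),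
          G.δ j y' = xg j h * (G.δ j g)⁻¹ := by
        refine fill_core G (fun mm => (f.app mm).hom.ker) hker _ hmem ?_
        intro a b hab ha hb
        rw [map_mul, map_mul, map_inv, map_inv]
        simp only [hxg]
        rw [horn_compat G u a b hab ha hb, dd G a b hab g]
      obtain ⟨y', hy'ker, hy'⟩ := key
      refine CommSq.HasLift.mk' ⟨simplexHom (y' * g), ?_, ?_⟩
      · apply horn.hom_ext
        intro j h
        rw [hornInclusion_simplexHom_face]
        show G.δ j (y' * g) = xg j h
        rw [map_mul, hy' j h]
        simp
      · rw [simplexHom_comp]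
        have he : (Functor.whiskerRight f (forget GrpCat)).app (op ⦋(k+1)+1⦌) (y' * g) = yH := by
          show f.app _ (y' * g) = yH
          rw [map_mul, MonoidHom.mem_ker.mp hy'ker, one_mul, hg]
        rw [he]
        exact hv.symm
end

section
/- Let A be a simplicial commutative ring. Then the unnormalized chain complex C(A) = ⊕_n A_n, with differential Σ (−1)^i d_i and the shuffle product a·x = Σ_{(σ,τ)∈P_{m,n}} sign(σ,τ) A(σ)(a)·A(τ)(x), is a strictly graded-commutative differential graded ring: for a ∈ A_m and b ∈ A_n one has a·b = (−1)^{mn} b·a, and a·a = 0 when m is odd. -/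
open CategoryTheory Simplicial Opposite

noncomputable section

/-- The monotone surjection `[m+n] → [k]` determined by a subset `s` of size `k`
of `{1, …, m+n}` (encoded as a subset of `Fin (m+n)` via `i ↦ i+1`): it sends `x` to
the number of elements of `s` (i.e. of jumps) below `x`. -/
def shufMap {N k : ℕ} (s : Finset (Fin N)) (hs : s.card = k) :
    SimplexCategory.mk N ⟶ SimplexCategory.mk k :=
  SimplexCategory.mkHom
    ⟨fun x => ⟨(s.filter (fun i : Fin N => (i : ℕ) < (x : ℕ))).card,
      Nat.lt_succ_of_le (hs ▸ Finset.card_filter_le s _)⟩,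
      fun x y hxy => by
        simp only [Fin.mk_le_mk]
        exact Finset.card_le_card (Finset.monotone_filter_right s
          (fun i _ hi => lt_of_lt_of_le hi hxy))⟩

/-- The sign of the `(m,n)`-shuffle `(σ, τ)` determined by the subset `s` (the set of
values of `σ`, shifted down by one); this is `(−1)^{∑_i (σ_i − i)}`, the sign of the
associated permutation of `{1, …, m+n}`. -/
def shufSign {N : ℕ} (s : Finset (Fin N)) : ℤ :=
  (-1) ^ ((∑ i ∈ s, ((i : ℕ) + 1)) + s.card * (s.card + 1) / 2)

lemma compl_card {m n : ℕ} (s : {s : Finset (Fin (m + n)) // s.card = m}) :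
    (s.1ᶜ : Finset (Fin (m + n))).card = n := by
  rw [Finset.card_compl, s.2, Fintype.card_fin]
  omega

/-- The shuffle product `A_m ⊗ A_n → A_{m+n}` of a simplicial commutative ring:
`a · b = ∑_{(σ,τ) ∈ P_{m,n}} sign(σ,τ) A(σ)(a) · A(τ)(b)`, the sum being over all
`(m,n)`-shuffles, where `A(σ)`, `A(τ)` are the degeneracy maps induced by the
monotone surjections `σ : [m+n] → [m]` and `τ : [m+n] → [n]`. -/
def sprod (A : SimplicialObject CommRingCat) (m n : ℕ)
    (a : A.obj (op (SimplexCategory.mk m))) (b : A.obj (op (SimplexCategory.mk n))) :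
    A.obj (op (SimplexCategory.mk (m + n))) :=
  ∑ s : {s : Finset (Fin (m + n)) // s.card = m},
    shufSign s.1 •
      (A.map (shufMap s.1 s.2).op a * A.map (shufMap s.1ᶜ (compl_card s)).op b)

end

section Aux

noncomputable section

lemma tri_mul_two (k : ℕ) : k * (k + 1) / 2 * 2 = k * (k + 1) :=
  Nat.div_mul_cancel (Nat.even_mul_succ_self k).two_dvd

lemma gauss (m n : ℕ) : (m + n) * (m + n + 1) / 2 = m * (m + 1) / 2 + n * (n + 1) / 2 + m * n := by
  have h1 := tri_mul_two m
  have h2 := tri_mul_two n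
  have h3 := tri_mul_two (m + n)
  have key : (m + n) * (m + n + 1) = m * (m + 1) + n * (n + 1) + 2 * (m * n) := by ring
  generalize m * (m + 1) = a at *
  generalize n * (n + 1) = b at *
  generalize m * n = c at *
  generalize (m + n) * (m + n + 1) = d at *
  omega

lemma sum_compl_add {N : ℕ} (s : Finset (Fin N)) :
    (∑ i ∈ s, ((i : ℕ) + 1)) + (∑ i ∈ sᶜ, ((i : ℕ) + 1)) = N * (N + 1) / 2 := by
  rw [Finset.sum_add_sum_compl]
  rw [Fin.sum_univ_eq_sum_range (fun i => i + 1)]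
  clear s
  induction N with
  | zero => simp
  | succ n ih =>
      rw [Finset.sum_range_succ, ih]
      have h1 := tri_mul_two n
      have h2 := tri_mul_two (n + 1)
      have key : (n + 1) * (n + 1 + 1) = n * (n + 1) + 2 * (n + 1) := by ring
      generalize n * (n + 1) = a at *
      generalize (n + 1) * (n + 1 + 1) = b at *
      omega

lemma shufSign_sq {N : ℕ} (s : Finset (Fin N)) : shufSign s * shufSign s = 1 := by
  rw [shufSign, ← pow_add, ← two_mul, pow_mul]
  norm_num

lemma shufSign_compl {m n : ℕ} (s : Finset (Fin (m + n))) (hs : s.card = m) :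
    shufSign s = (-1) ^ (m * n) * shufSign sᶜ := by
  have hsc : (sᶜ).card = n := by
    rw [Finset.card_compl, hs, Fintype.card_fin]; omega
  have key : shufSign s * shufSign sᶜ = (-1) ^ (m * n) := by
    rw [shufSign, shufSign, ← pow_add, hs, hsc]
    have he : (∑ i ∈ s, ((i : ℕ) + 1)) + m * (m + 1) / 2 +
        ((∑ i ∈ sᶜ, ((i : ℕ) + 1)) + n * (n + 1) / 2)
        = m * n + 2 * (m * (m + 1) / 2 + n * (n + 1) / 2) := by
      have := sum_compl_add s
      have := gauss m n
      omega
    rw [he, pow_add, pow_mul]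
    norm_num
  calc shufSign s = shufSign s * (shufSign sᶜ * shufSign sᶜ) := by rw [shufSign_sq, mul_one]
    _ = (shufSign s * shufSign sᶜ) * shufSign sᶜ := by ring
    _ = (-1) ^ (m * n) * shufSign sᶜ := by rw [key]

lemma shufSign_map {N N' : ℕ} (e : N = N') (s : Finset (Fin N)) :
    shufSign (s.map (finCongr e).toEmbedding) = shufSign s := by
  subst e
  simp

lemma map_compl_equiv {N N' : ℕ} (e : N = N') (s : Finset (Fin N)) :
    (s.map (finCongr e).toEmbedding)ᶜ = sᶜ.map (finCongr e).toEmbedding := by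
  subst e; simp

lemma shufMap_congr {N k : ℕ} {s s' : Finset (Fin N)} (h : s = s') (hs : s.card = k) :
    shufMap s hs = shufMap s' (h ▸ hs) := by
  subst h; rfl

lemma shufMap_cast {N N' k : ℕ} (e : N = N') (s : Finset (Fin N)) (hs : s.card = k)
    (hs' : (s.map (finCongr e).toEmbedding).card = k) :
    eqToHom (congrArg SimplexCategory.mk e) ≫ shufMap (s.map (finCongr e).toEmbedding) hs'
      = shufMap s hs := by
  subst e
  simp only [eqToHom_refl, Category.id_comp]
  have h : s.map (finCongr rfl).toEmbedding = s := by simp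
  exact shufMap_congr h hs'

lemma cast_eq_map (A : SimplicialObject CommRingCat) {N N' : ℕ} (e : N' = N)
    (x : A.obj (op (SimplexCategory.mk N'))) :
    cast (congrArg (fun k => ((A.obj (op (SimplexCategory.mk k))) : Type)) e) x
      = A.map (eqToHom (congrArg SimplexCategory.mk e.symm)).op x := by
  subst e
  simp

/-- complementation + reindexing as an equivalence of shuffle index sets -/
def complEquiv (m n : ℕ) :
    {s : Finset (Fin (m + n)) // s.card = m} ≃ {t : Finset (Fin (n + m)) // t.card = n} where
  toFun s := ⟨(s.1ᶜ).map (finCongr (Nat.add_comm m n)).toEmbedding,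
    by rw [Finset.card_map]; exact compl_card s⟩
  invFun t := ⟨(t.1ᶜ).map (finCongr (Nat.add_comm n m)).toEmbedding,
    by rw [Finset.card_map]; exact compl_card t⟩
  left_inv s := by
    apply Subtype.ext
    simp only
    ext x
    simp [Finset.mem_map_equiv]
  right_inv t := by
    apply Subtype.ext
    simp only
    ext x
    simp [Finset.mem_map_equiv]

end

end Aux

/-- Let `A` be a simplicial commutative ring.  Then the unnormalized
chain complex `C(A) = ⊕_n A_n`, with differential `∑ (−1)^i d_i` and the shuffle
product, is a strictly graded-commutative (differential graded) ring: for `a ∈ A_m`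
and `b ∈ A_n` one has `a · b = (−1)^{mn} b · a`, and `a · a = 0` when `m` is odd. -/
theorem stmt17 (A : SimplicialObject CommRingCat) :
    (∀ (m n : ℕ) (a : A.obj (op (SimplexCategory.mk m)))
        (b : A.obj (op (SimplexCategory.mk n))),
      sprod A m n a b = (-1 : ℤ) ^ (m * n) •
        cast (congrArg (fun k => ((A.obj (op (SimplexCategory.mk k))) : Type))
          (Nat.add_comm n m)) (sprod A n m b a)) ∧
    (∀ m : ℕ, Odd m → ∀ a : A.obj (op (SimplexCategory.mk m)),
      sprod A m m a a = 0) := by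
  constructor
  · intro m n a b
    rw [cast_eq_map A (Nat.add_comm n m) (sprod A n m b a)]
    set g : SimplexCategory.mk (m + n) ⟶ SimplexCategory.mk (n + m) :=
      eqToHom (congrArg SimplexCategory.mk (Nat.add_comm n m).symm) with hg
    rw [sprod, sprod, map_sum, Finset.smul_sum]
    apply Fintype.sum_equiv (complEquiv m n)
    intro s
    set t : {t : Finset (Fin (n + m)) // t.card = n} := complEquiv m n s with ht
    have ht1 : t.1 = (s.1ᶜ).map (finCongr (Nat.add_comm m n)).toEmbedding := rfl
    -- rewrite the complement of t
    have htc : t.1ᶜ = s.1.map (finCongr (Nat.add_comm m n)).toEmbedding := by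
      rw [ht1, map_compl_equiv, compl_compl]
    have hcomp1 : g ≫ shufMap t.1 t.2 = shufMap s.1ᶜ (compl_card s) :=
      shufMap_cast (Nat.add_comm m n) s.1ᶜ (compl_card s)
        (by rw [Finset.card_map]; exact compl_card s)
    have key1 : A.map g.op (A.map (shufMap t.1 t.2).op b)
        = A.map (shufMap s.1ᶜ (compl_card s)).op b := by
      rw [← comp_apply, ← A.map_comp, ← op_comp, hcomp1]
    have hcomp2 : g ≫ shufMap t.1ᶜ (compl_card t) = shufMap s.1 s.2 := by
      rw [shufMap_congr htc (compl_card t)]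
      exact shufMap_cast (Nat.add_comm m n) s.1 s.2 (htc ▸ compl_card t)
    have key2 : A.map g.op (A.map (shufMap t.1ᶜ (compl_card t)).op a)
        = A.map (shufMap s.1 s.2).op a := by
      rw [← comp_apply, ← A.map_comp, ← op_comp, hcomp2]
    rw [map_zsmul, map_mul, key1, key2, smul_smul]
    have hsgn : shufSign t.1 = shufSign s.1ᶜ := by
      rw [ht1]; exact shufSign_map _ _
    rw [hsgn, ← shufSign_compl s.1 s.2, mul_comm (A.map (shufMap s.1ᶜ (compl_card s)).op b)]
  · intro m hm a
    have hpos : 0 < m + m := by obtain ⟨k, hk⟩ := hm; omega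
    rw [sprod]
    apply Finset.sum_involution
      (g := fun s _ => (⟨s.1ᶜ, compl_card s⟩ : {s : Finset (Fin (m + m)) // s.card = m}))
    · intro s _
      have hcc : (⟨s.1ᶜ, compl_card s⟩ :
          {s : Finset (Fin (m + m)) // s.card = m}).1ᶜ = s.1 := compl_compl s.1
      rw [shufMap_congr hcc (compl_card ⟨s.1ᶜ, compl_card s⟩)]
      have hsgn : shufSign (s.1ᶜ) = - shufSign s.1 := by
        have := shufSign_compl s.1 s.2
        have hodd : Odd (m * m) := hm.mul hm
        rw [hodd.neg_one_pow] at this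
        linarith
      rw [hsgn, mul_comm (A.map (shufMap s.1ᶜ (compl_card s)).op a), neg_smul, add_neg_cancel]
    · intro s _ _ h
      have h1 : s.1ᶜ = s.1 := congrArg Subtype.val h
      by_cases hmem : (⟨0, hpos⟩ : Fin (m + m)) ∈ s.1
      · have hc : (⟨0, hpos⟩ : Fin (m + m)) ∈ s.1ᶜ := by rw [h1]; exact hmem
        exact Finset.mem_compl.1 hc hmem
      · have hc : (⟨0, hpos⟩ : Fin (m + m)) ∈ s.1ᶜ := Finset.mem_compl.2 hmem
        rw [h1] at hc
        exact hmem hc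
    · intro s _; exact Finset.mem_univ _
    · intro s _
      apply Subtype.ext
      exact compl_compl s.1
end
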